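/- arXiv:1806.03313 — 2 statements merged into one kernel-verified Lean document; each statement's English description precedes it below -/
import Mathlib

section
/- Let s ≤ d be natural numbers and let x : ℕ → ℝ be nonnegative with x_j = 0 for j > d. Then ∑_{k=s}^{d} ∑_{j=k}^{d} x_j · C(j,s) · C(j-s, k-s) · C(d,s) · C(d-s, k-s) ≤ C(d,s)² · C(2(d-s), d-s) · ∑_{j=s}^{d} x_j. -/
open Finset

lemma sum_choose_sq (n : ℕ) :
    ∑ i ∈ Finset.range (n + 1), n.choose i * n.choose i = (2 * n).choose n := by
  rw [two_mul, Nat.add_choose_eq,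
    Finset.Nat.sum_antidiagonal_eq_sum_range_succ (fun i j => n.choose i * n.choose j)]
  refine Finset.sum_congr rfl fun i hi => ?_
  simp only [Finset.mem_range] at hi
  rw [Nat.choose_symm (by omega)]

theorem stmt8 (s d : ℕ) (hsd : s ≤ d) (x : ℕ → ℝ) (hx : ∀ j, 0 ≤ x j)
    (hx0 : ∀ j, d < j → x j = 0) :
    ∑ k ∈ Finset.Icc s d, ∑ j ∈ Finset.Icc k d,
        x j * (j.choose s : ℝ) * ((j - s).choose (k - s) : ℝ)
          * (d.choose s : ℝ) * ((d - s).choose (k - s) : ℝ)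
      ≤ (d.choose s : ℝ) ^ 2 * ((2 * (d - s)).choose (d - s) : ℝ)
          * ∑ j ∈ Finset.Icc s d, x j := by
  have key : ∑ k ∈ Finset.Icc s d, ∑ j ∈ Finset.Icc k d,
        x j * (j.choose s : ℝ) * ((j - s).choose (k - s) : ℝ)
          * (d.choose s : ℝ) * ((d - s).choose (k - s) : ℝ)
      ≤ ∑ k ∈ Finset.Icc s d, (∑ j ∈ Finset.Icc s d, x j) *
          ((d.choose s : ℝ) ^ 2 * ((d - s).choose (k - s) : ℝ) ^ 2) := by
    refine Finset.sum_le_sum fun k hk => ?_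
    simp only [Finset.mem_Icc] at hk
    calc ∑ j ∈ Finset.Icc k d,
        x j * (j.choose s : ℝ) * ((j - s).choose (k - s) : ℝ)
          * (d.choose s : ℝ) * ((d - s).choose (k - s) : ℝ)
        ≤ ∑ j ∈ Finset.Icc k d,
            x j * ((d.choose s : ℝ) ^ 2 * ((d - s).choose (k - s) : ℝ) ^ 2) := by
          refine Finset.sum_le_sum fun j hj => ?_
          simp only [Finset.mem_Icc] at hj
          have h1 : (j.choose s : ℝ) ≤ (d.choose s : ℝ) := by
            exact_mod_cast Nat.choose_le_choose s hj.2
          have h2 : ((j - s).choose (k - s) : ℝ) ≤ ((d - s).choose (k - s) : ℝ) := by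
            exact_mod_cast Nat.choose_le_choose (k - s) (by omega)
          have h3 : (0:ℝ) ≤ (j.choose s : ℝ) := Nat.cast_nonneg _
          have h4 : (0:ℝ) ≤ ((j - s).choose (k - s) : ℝ) := Nat.cast_nonneg _
          have h5 : (0:ℝ) ≤ ((d - s).choose (k - s) : ℝ) := Nat.cast_nonneg _
          have h6 : (0:ℝ) ≤ (d.choose s : ℝ) := Nat.cast_nonneg _
          have hab : (j.choose s : ℝ) * ((j - s).choose (k - s) : ℝ)
              ≤ (d.choose s : ℝ) * ((d - s).choose (k - s) : ℝ) := mul_le_mul h1 h2 h4 h6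
          calc x j * (j.choose s : ℝ) * ((j - s).choose (k - s) : ℝ)
                * (d.choose s : ℝ) * ((d - s).choose (k - s) : ℝ)
              = (x j * ((j.choose s : ℝ) * ((j - s).choose (k - s) : ℝ)))
                * ((d.choose s : ℝ) * ((d - s).choose (k - s) : ℝ)) := by ring
            _ ≤ (x j * ((d.choose s : ℝ) * ((d - s).choose (k - s) : ℝ)))
                * ((d.choose s : ℝ) * ((d - s).choose (k - s) : ℝ)) :=
                mul_le_mul_of_nonneg_right
                  (mul_le_mul_of_nonneg_left hab (hx j)) (mul_nonneg h6 h5)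
            _ = x j * ((d.choose s : ℝ) ^ 2 * ((d - s).choose (k - s) : ℝ) ^ 2) := by ring
      _ ≤ ∑ j ∈ Finset.Icc s d,
            x j * ((d.choose s : ℝ) ^ 2 * ((d - s).choose (k - s) : ℝ) ^ 2) := by
          refine Finset.sum_le_sum_of_subset_of_nonneg
            (Finset.Icc_subset_Icc_left hk.1) fun j _ _ => ?_
          exact mul_nonneg (hx j) (by positivity)
      _ = (∑ j ∈ Finset.Icc s d, x j) *
            ((d.choose s : ℝ) ^ 2 * ((d - s).choose (k - s) : ℝ) ^ 2) := by
          rw [Finset.sum_mul]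
  refine key.trans ?_
  have hre : ∑ k ∈ Finset.Icc s d, (∑ j ∈ Finset.Icc s d, x j) *
        ((d.choose s : ℝ) ^ 2 * ((d - s).choose (k - s) : ℝ) ^ 2)
      = (∑ j ∈ Finset.Icc s d, x j) * (d.choose s : ℝ) ^ 2 *
        ∑ i ∈ Finset.range (d - s + 1), ((d - s).choose i : ℝ) ^ 2 := by
    rw [Finset.mul_sum]
    refine Finset.sum_nbij' (fun k => k - s) (fun i => s + i) ?_ ?_ ?_ ?_ ?_ <;>
      intros a ha <;> simp only [Finset.mem_Icc, Finset.mem_range] at * <;>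
      first
        | omega
        | ring
  rw [hre]
  have hid : ∑ i ∈ Finset.range (d - s + 1), ((d - s).choose i : ℝ) ^ 2
      = ((2 * (d - s)).choose (d - s) : ℝ) := by
    rw [← sum_choose_sq (d - s)]
    push_cast
    exact Finset.sum_congr rfl fun i _ => (sq _)
  rw [hid]; exact le_of_eq (by ring)
end

section
/- Let s ≤ d and let x_j ≥ 0 for s ≤ j ≤ d be reals, n ≥ 0, 0 < r ≤ 1, and define for each k with s ≤ k ≤ d the quantity E_k = r²·∑_{j=k}^{d} C(j,k)·x_j + n·r·C(d,k). Then ∑_{k=s}^{d} C(k,s)²·E_k² ≤ C(d,s)²·C(2(d-s), d-s)·(r²·g + n·r)², where g = ∑_{j=s}^{d} x_j. -/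
open Finset

lemma central_sq_sum (m : ℕ) :
    ∑ i ∈ Finset.range (m + 1), (m.choose i) ^ 2 = (2 * m).choose m := by
  rw [two_mul, Nat.add_choose_eq, Finset.Nat.sum_antidiagonal_eq_sum_range_succ_mk]
  refine Finset.sum_congr rfl fun i hi => ?_
  rw [Finset.mem_range, Nat.lt_succ_iff] at hi
  rw [Nat.choose_symm hi, sq]

theorem stmt15 (d s : ℕ) (hsd : s ≤ d) (x : ℕ → ℝ) (hx : ∀ j, 0 ≤ x j)
    (n r : ℝ) (hn : 0 ≤ n) (hr0 : 0 < r) (hr1 : r ≤ 1) :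
    ∑ k ∈ Finset.Icc s d, (k.choose s : ℝ) ^ 2 *
        (r ^ 2 * ∑ j ∈ Finset.Icc k d, (j.choose k : ℝ) * x j + n * r * (d.choose k : ℝ)) ^ 2
      ≤ (d.choose s : ℝ) ^ 2 * ((2 * (d - s)).choose (d - s) : ℝ)
          * (r ^ 2 * (∑ j ∈ Finset.Icc s d, x j) + n * r) ^ 2 := by
  set g : ℝ := ∑ j ∈ Finset.Icc s d, x j with hg
  have hgnn : 0 ≤ g := Finset.sum_nonneg fun j _ => hx j
  have hA : 0 ≤ r ^ 2 * g + n * r := by positivity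
  have key : ∀ k ∈ Finset.Icc s d,
      (k.choose s : ℝ) ^ 2 *
        (r ^ 2 * ∑ j ∈ Finset.Icc k d, (j.choose k : ℝ) * x j + n * r * (d.choose k : ℝ)) ^ 2
      ≤ ((d.choose s : ℝ) * ((d - s).choose (k - s) : ℝ)) ^ 2 * (r ^ 2 * g + n * r) ^ 2 := by
    intro k hk
    rw [Finset.mem_Icc] at hk
    obtain ⟨hsk, hkd⟩ := hk
    have hid : (d.choose k) * (k.choose s) = d.choose s * (d - s).choose (k - s) :=
      Nat.choose_mul hsk
    have hEnn : 0 ≤ r ^ 2 * ∑ j ∈ Finset.Icc k d, (j.choose k : ℝ) * x j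
        + n * r * (d.choose k : ℝ) := by
      have : 0 ≤ ∑ j ∈ Finset.Icc k d, (j.choose k : ℝ) * x j :=
        Finset.sum_nonneg fun j _ => mul_nonneg (by positivity) (hx j)
      positivity
    rw [← mul_pow, ← mul_pow]
    apply pow_le_pow_left₀ (by positivity)
    calc (k.choose s : ℝ) *
          (r ^ 2 * ∑ j ∈ Finset.Icc k d, (j.choose k : ℝ) * x j + n * r * (d.choose k : ℝ))
        = r ^ 2 * ∑ j ∈ Finset.Icc k d, ((k.choose s : ℝ) * (j.choose k : ℝ)) * x j
          + n * r * ((d.choose k : ℝ) * (k.choose s : ℝ)) := by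
          rw [mul_add]
          congr 1
          · rw [mul_left_comm, Finset.mul_sum]
            refine congrArg _ (Finset.sum_congr rfl fun j _ => by ring)
          · ring
      _ ≤ r ^ 2 * ∑ j ∈ Finset.Icc k d, ((d.choose s : ℝ) * ((d - s).choose (k - s) : ℝ)) * x j
          + n * r * ((d.choose s : ℝ) * ((d - s).choose (k - s) : ℝ)) := by
          have hid' : ((d.choose k : ℝ) * (k.choose s : ℝ))
              = (d.choose s : ℝ) * ((d - s).choose (k - s) : ℝ) := by exact_mod_cast hid
          have hcb : ∀ j ∈ Finset.Icc k d, ((k.choose s : ℝ) * (j.choose k : ℝ)) * x j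
              ≤ ((d.choose s : ℝ) * ((d - s).choose (k - s) : ℝ)) * x j := by
            intro j hj
            rw [Finset.mem_Icc] at hj
            refine mul_le_mul_of_nonneg_right ?_ (hx j)
            calc (k.choose s : ℝ) * (j.choose k : ℝ)
                ≤ (k.choose s : ℝ) * (d.choose k : ℝ) := by
                  gcongr
                  exact hj.2
              _ = (d.choose s : ℝ) * ((d - s).choose (k - s) : ℝ) := by
                  rw [mul_comm]; exact hid'
          refine add_le_add ?_ (by rw [hid'])
          exact mul_le_mul_of_nonneg_left (Finset.sum_le_sum hcb) (by positivity)
      _ = ((d.choose s : ℝ) * ((d - s).choose (k - s) : ℝ)) *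
            (r ^ 2 * ∑ j ∈ Finset.Icc k d, x j + n * r) := by
          rw [← Finset.mul_sum]; ring
      _ ≤ ((d.choose s : ℝ) * ((d - s).choose (k - s) : ℝ)) * (r ^ 2 * g + n * r) := by
          gcongr
          exact Finset.sum_le_sum_of_subset_of_nonneg
            (Finset.Icc_subset_Icc_left hsk) (fun j _ _ => hx j)
  calc ∑ k ∈ Finset.Icc s d, (k.choose s : ℝ) ^ 2 *
        (r ^ 2 * ∑ j ∈ Finset.Icc k d, (j.choose k : ℝ) * x j + n * r * (d.choose k : ℝ)) ^ 2
      ≤ ∑ k ∈ Finset.Icc s d,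
          ((d.choose s : ℝ) * ((d - s).choose (k - s) : ℝ)) ^ 2 * (r ^ 2 * g + n * r) ^ 2 :=
        Finset.sum_le_sum key
    _ = (d.choose s : ℝ) ^ 2 * ((2 * (d - s)).choose (d - s) : ℝ)
          * (r ^ 2 * g + n * r) ^ 2 := by
        rw [← Finset.sum_mul]
        congr 1
        have : ∑ k ∈ Finset.Icc s d, ((d.choose s : ℝ) * ((d - s).choose (k - s) : ℝ)) ^ 2
            = (d.choose s : ℝ) ^ 2 * ∑ i ∈ Finset.range (d - s + 1),
                (((d - s).choose i : ℝ)) ^ 2 := by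
          rw [Finset.mul_sum]
          rw [show Finset.Icc s d = Finset.map ⟨fun i => s + i, add_right_injective s⟩
              (Finset.range (d - s + 1)) from ?_]
          · rw [Finset.sum_map]
            refine Finset.sum_congr rfl fun i hi => ?_
            simp only [Function.Embedding.coeFn_mk]
            rw [Nat.add_sub_cancel_left, mul_pow]
          · ext a
            simp only [Finset.mem_Icc, Finset.mem_map, Finset.mem_range,
              Function.Embedding.coeFn_mk]
            constructor
            · rintro ⟨h1, h2⟩; exact ⟨a - s, by omega, by omega⟩
            · rintro ⟨i, hi, rfl⟩; omega
        rw [this, ← central_sq_sum (d - s)]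
        push_cast
        ring
end
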